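/- For the two-qubit state σ_r above with (5-√17)/16 < r < (5+√17)/16, the partial transpose σ_r^{T_B} equals (1/4)|00⟩⟨00| + (1/8)|11⟩⟨11| + r|01⟩⟨01| + (5/8-r)|10⟩⟨10| + (1/(4√2))(|00⟩⟨11| + |11⟩⟨00|), and σ_r^{T_B} ≥ 0; thus σ_r is a PPT state. -/

import Mathlib

open scoped Matrix ComplexOrder

/-- Partial transpose on the second tensor factor. -/
def pt {α β : Type*} (M : Matrix (α × β) (α × β) ℂ) : Matrix (α × β) (α × β) ℂ :=
  fun p q => M (p.1, q.2) (q.1, p.2)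

open scoped Classical in
/-- Trace norm of a Hermitian matrix: sum of absolute values of eigenvalues
(and `0` on non-Hermitian matrices). -/
noncomputable def traceNorm {n : Type*} [Fintype n] [DecidableEq n]
    (M : Matrix n n ℂ) : ℝ :=
  if h : M.IsHermitian then ∑ i, |h.eigenvalues i| else 0

open scoped Classical in
/-- Operator norm of a Hermitian matrix: maximum absolute value of eigenvalues
(and `0` on non-Hermitian matrices). -/
noncomputable def opNorm {n : Type*} [Fintype n] [DecidableEq n]
    (M : Matrix n n ℂ) : ℝ :=
  if h : M.IsHermitian then ⨆ i, |h.eigenvalues i| else 0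

/-- The two-qubit matrix `σ_r` from the paper:
`σ_r = (1/4)|00⟩⟨00| + (1/8)|11⟩⟨11| + r|01⟩⟨01| + (5/8-r)|10⟩⟨10|
      + (1/(4√2))(|01⟩⟨10| + |10⟩⟨01|)`. -/
noncomputable def sigmaR (r : ℝ) : Matrix (Fin 2 × Fin 2) (Fin 2 × Fin 2) ℂ :=
  fun p q =>
    if p = (0, 0) ∧ q = (0, 0) then 1 / 4
    else if p = (1, 1) ∧ q = (1, 1) then 1 / 8
    else if p = (0, 1) ∧ q = (0, 1) then ((r : ℝ) : ℂ)
    else if p = (1, 0) ∧ q = (1, 0) then ((5 / 8 - r : ℝ) : ℂ)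
    else if p = (0, 1) ∧ q = (1, 0) then ((1 / (4 * Real.sqrt 2) : ℝ) : ℂ)
    else if p = (1, 0) ∧ q = (0, 1) then ((1 / (4 * Real.sqrt 2) : ℝ) : ℂ)
    else 0

noncomputable def Amat (r : ℝ) : Matrix (Fin 2 × Fin 2) (Fin 2 × Fin 2) ℂ :=
  fun p q =>
    if p = (0, 0) ∧ q = (0, 0) then 1 / 4
    else if p = (1, 1) ∧ q = (1, 1) then 1 / 8
    else if p = (0, 1) ∧ q = (0, 1) then ((r : ℝ) : ℂ)
    else if p = (1, 0) ∧ q = (1, 0) then ((5 / 8 - r : ℝ) : ℂ)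
    else if p = (0, 0) ∧ q = (1, 1) then ((1 / (4 * Real.sqrt 2) : ℝ) : ℂ)
    else if p = (1, 1) ∧ q = (0, 0) then ((1 / (4 * Real.sqrt 2) : ℝ) : ℂ)
    else 0

lemma Amat_key (r : ℝ) (x : Fin 2 × Fin 2 → ℂ) :
    dotProduct (star x) ((Amat r).mulVec x) =
        ((Complex.normSq (x (0,0) / 2 + x (1,1) / (2 * (Real.sqrt 2 : ℝ)))
          + r * Complex.normSq (x (0,1))
          + (5/8 - r) * Complex.normSq (x (1,0)) : ℝ) : ℂ) := by
  have hs : ((Real.sqrt 2 : ℝ) : ℂ) * ((Real.sqrt 2 : ℝ) : ℂ) = 2 := by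
    rw [← Complex.ofReal_mul, Real.mul_self_sqrt (by norm_num : (0:ℝ) ≤ 2)]; norm_num
  simp only [Amat, dotProduct, Matrix.mulVec, Fintype.sum_prod_type,
    Fin.sum_univ_two, Pi.star_apply, Prod.mk.injEq, Prod.ext_iff]
  norm_num
  rw [Complex.normSq_eq_conj_mul_self, Complex.normSq_eq_conj_mul_self,
    Complex.normSq_eq_conj_mul_self]
  simp only [map_add, map_div₀, map_mul, Complex.conj_ofReal, map_ofNat]
  field_simp
  ring_nf
  simp only [show ((Real.sqrt 2 : ℝ) : ℂ)^4 = 4 by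
      rw [show ((Real.sqrt 2 : ℝ) : ℂ)^4 = (((Real.sqrt 2:ℝ):ℂ)*((Real.sqrt 2:ℝ):ℂ))*(((Real.sqrt 2:ℝ):ℂ)*((Real.sqrt 2:ℝ):ℂ)) by ring, hs]; norm_num,
    show ((Real.sqrt 2 : ℝ) : ℂ)^2 = 2 by rw [sq, hs]]
  ring

lemma Amat_herm (r : ℝ) : (Amat r).IsHermitian := by
  ext ⟨i, j⟩ ⟨k, l⟩
  fin_cases i <;> fin_cases j <;> fin_cases k <;> fin_cases l <;>
    simp [Amat, Matrix.conjTranspose_apply, Prod.ext_iff, map_sub,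
      Complex.conj_ofReal, map_inv₀, map_mul]

lemma pt_sigmaR (r : ℝ) : pt (sigmaR r) = Amat r := by
  funext p q
  obtain ⟨i, j⟩ := p
  obtain ⟨k, l⟩ := q
  fin_cases i <;> fin_cases j <;> fin_cases k <;> fin_cases l <;>
    simp [pt, sigmaR, Amat, Prod.ext_iff]

/-- for `(5-√17)/16 < r < (5+√17)/16`, the partial transpose of
`σ_r` is `(1/4)|00⟩⟨00| + (1/8)|11⟩⟨11| + r|01⟩⟨01| + (5/8-r)|10⟩⟨10|
+ (1/(4√2))(|00⟩⟨11| + |11⟩⟨00|)`, and it is positive semidefinite, so `σ_r`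
is a PPT state. -/
theorem statement16 (r : ℝ)
    (hlo : (5 - Real.sqrt 17) / 16 < r) (hhi : r < (5 + Real.sqrt 17) / 16) :
    pt (sigmaR r) =
      (fun p q =>
        if p = (0, 0) ∧ q = (0, 0) then 1 / 4
        else if p = (1, 1) ∧ q = (1, 1) then 1 / 8
        else if p = (0, 1) ∧ q = (0, 1) then ((r : ℝ) : ℂ)
        else if p = (1, 0) ∧ q = (1, 0) then ((5 / 8 - r : ℝ) : ℂ)
        else if p = (0, 0) ∧ q = (1, 1) then ((1 / (4 * Real.sqrt 2) : ℝ) : ℂ)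
        else if p = (1, 1) ∧ q = (0, 0) then ((1 / (4 * Real.sqrt 2) : ℝ) : ℂ)
        else 0 : Matrix (Fin 2 × Fin 2) (Fin 2 × Fin 2) ℂ) ∧
    (pt (sigmaR r)).PosSemidef := by
  have h5 : Real.sqrt 17 < 5 := by
    nlinarith [Real.sq_sqrt (by norm_num : (17:ℝ) ≥ 0), Real.sqrt_nonneg 17]
  have hr0 : 0 ≤ r := by nlinarith
  have hr1 : r ≤ 5 / 8 := by nlinarith
  refine ⟨pt_sigmaR r, ?_⟩
  rw [pt_sigmaR r]
  refine Matrix.posSemidef_iff_dotProduct_mulVec.mpr ⟨Amat_herm r, fun x => ?_⟩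
  rw [Amat_key r x]
  rw [← Complex.ofReal_zero, Complex.real_le_real]
  have := Complex.normSq_nonneg (x (0,0) / 2 + x (1,1) / (2 * (Real.sqrt 2 : ℝ)))
  have := Complex.normSq_nonneg (x (0,1))
  have := Complex.normSq_nonneg (x (1,0))
  nlinarith
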